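/- (Proposition 1, conflicting-preferences case.) Assume d_A ≠ 0, d_B ≠ 0, and d_A·d_B < 0; set κ = d_A/d_B < 0, and for α_B ∈ [0,1) let α_A*(α_B) denote the unique minimizer of L_A(·, α_B) on [0,1). Then: (i) if d_A²·(1 − 1/(2κ)) ≤ p, then α_A*(α_B) = 0 for every α_B; (ii) if d_A² ≥ p, then for every α_B with strict inequality d_A² − λ(α_B)d_A d_B/2 > p, α_A*(α_B) is the unique solution in (0,1) of f_A(α) = h_A(α_B); (iii) if d_A² < p < d_A²·(1 − 1/(2κ)), then α_A*(α_B) = 0 when λ(α_B) ≤ (2d_A² − 2p)/(d_A d_B), and α_A*(α_B) is the unique solution in (0,1) of f_A(α) = h_A(α_B) when λ(α_B) > (2d_A² − 2p)/(d_A d_B). -/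

import Mathlib

open Set Filter

/-- Team decision formed by the two digital representatives. -/
noncomputable def teamDec (lam : ℝ → ℝ) (thA thB mu : ℝ) (aA aB : ℝ) : ℝ :=
  (lam aA * thA + (1 - lam aA) * mu + lam aB * thB + (1 - lam aB) * mu) / 2

/-- Alice's total loss: preference loss plus communication cost. -/
noncomputable def lossA (lam c : ℝ → ℝ) (thA thB mu : ℝ) (aA aB : ℝ) : ℝ :=
  (thA - teamDec lam thA thB mu aA aB) ^ 2 + c aA

/-- Bob's total loss: preference loss plus communication cost. -/
noncomputable def lossB (lam c : ℝ → ℝ) (thA thB mu : ℝ) (aA aB : ℝ) : ℝ :=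
  (thB - teamDec lam thA thB mu aA aB) ^ 2 + c aB

/-- The function `f_m(α) = λ(α) + (2/d_m²)·c'(α)/λ'(α)`. -/
noncomputable def fFun (lam lam' c' : ℝ → ℝ) (d : ℝ) (α : ℝ) : ℝ :=
  lam α + (2 / d ^ 2) * (c' α / lam' α)

/-- The function `h_m(α) = 2 − λ(α)·d_{−m}/d_m`. -/
noncomputable def hFun (lam : ℝ → ℝ) (dm dOther : ℝ) (α : ℝ) : ℝ :=
  2 - lam α * dOther / dm

/-- `a` is a best response of Alice to Bob's revelation `aB`:
it minimizes `α ↦ L_A(α, aB)` over `[0,1)`. -/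
def IsBestRespA (lam c : ℝ → ℝ) (thA thB mu : ℝ) (a aB : ℝ) : Prop :=
  a ∈ Set.Ico (0:ℝ) 1 ∧
    ∀ x ∈ Set.Ico (0:ℝ) 1, lossA lam c thA thB mu a aB ≤ lossA lam c thA thB mu x aB

/-- Nash equilibrium of the digital representative game. -/
def IsNashEq (lam c : ℝ → ℝ) (thA thB mu : ℝ) (aA aB : ℝ) : Prop :=
  aA ∈ Set.Ico (0:ℝ) 1 ∧ aB ∈ Set.Ico (0:ℝ) 1 ∧
  (∀ α ∈ Set.Ico (0:ℝ) 1, lossA lam c thA thB mu aA aB ≤ lossA lam c thA thB mu α aB) ∧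
  (∀ α ∈ Set.Ico (0:ℝ) 1, lossB lam c thA thB mu aA aB ≤ lossB lam c thA thB mu aA α)

/-- Proposition 1, conflicting preferences, `κ = d_A/d_B < 0`. -/
theorem bestRespA_conflicting
    (lam lam' c c' : ℝ → ℝ)
    (hlamDeriv : ∀ α ∈ Set.Icc (0:ℝ) 1, HasDerivAt lam (lam' α) α)
    (hlam'Cont : ContinuousOn lam' (Set.Icc (0:ℝ) 1))
    (hlam0 : lam 0 = 0) (hlam1 : lam 1 = 1)
    (hlam'pos : ∀ α ∈ Set.Icc (0:ℝ) 1, 0 < lam' α)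
    (hlam'anti : ∀ x ∈ Set.Icc (0:ℝ) 1, ∀ y ∈ Set.Icc (0:ℝ) 1, x ≤ y → lam' y ≤ lam' x)
    (hcDeriv : ∀ α ∈ Set.Ico (0:ℝ) 1, HasDerivAt c (c' α) α)
    (hc'Cont : ContinuousOn c' (Set.Ico (0:ℝ) 1))
    (hc0 : c 0 = 0)
    (hc'nonneg : ∀ α ∈ Set.Ico (0:ℝ) 1, 0 ≤ c' α)
    (hc'strictMono : ∀ x ∈ Set.Ico (0:ℝ) 1, ∀ y ∈ Set.Ico (0:ℝ) 1, x < y → c' x < c' y)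
    (hc'top : Filter.Tendsto c' (nhdsWithin 1 (Set.Iio 1)) Filter.atTop)
    (thA thB muG dA dB : ℝ)
    (hdA : dA = thA - muG) (hdB : dB = thB - muG)
    (hdAne : dA ≠ 0) (hdBne : dB ≠ 0) (hconf : dA * dB < 0) :
    -- (i) if `d_A²(1 − 1/(2κ)) ≤ p`, Alice never reveals
    ((dA ^ 2 * (1 - 1 / (2 * (dA / dB))) ≤ c' 0 / lam' 0 →
        ∀ aB ∈ Set.Ico (0:ℝ) 1, ∀ a, IsBestRespA lam c thA thB muG a aB → a = 0)) ∧
    -- (ii) if `d_A² ≥ p` and `d_A² − λ(α_B)d_Ad_B/2 > p`, Alice's best response is the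
    -- unique interior solution of `f_A(α) = h_A(α_B)`
    ((dA ^ 2 ≥ c' 0 / lam' 0 →
        ∀ aB ∈ Set.Ico (0:ℝ) 1, dA ^ 2 - lam aB * dA * dB / 2 > c' 0 / lam' 0 →
          ∀ a, IsBestRespA lam c thA thB muG a aB →
            a ∈ Set.Ioo (0:ℝ) 1 ∧
            fFun lam lam' c' dA a = hFun lam dA dB aB ∧
            ∀ x ∈ Set.Ioo (0:ℝ) 1, fFun lam lam' c' dA x = hFun lam dA dB aB → x = a)) ∧
    -- (iii) intermediate trigger price: threshold behavior in `λ(α_B)`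
    ((dA ^ 2 < c' 0 / lam' 0 ∧ c' 0 / lam' 0 < dA ^ 2 * (1 - 1 / (2 * (dA / dB))) →
        ∀ aB ∈ Set.Ico (0:ℝ) 1, ∀ a, IsBestRespA lam c thA thB muG a aB →
          ((lam aB ≤ (2 * dA ^ 2 - 2 * (c' 0 / lam' 0)) / (dA * dB) → a = 0) ∧
           (lam aB > (2 * dA ^ 2 - 2 * (c' 0 / lam' 0)) / (dA * dB) →
             a ∈ Set.Ioo (0:ℝ) 1 ∧
             fFun lam lam' c' dA a = hFun lam dA dB aB ∧
             ∀ x ∈ Set.Ioo (0:ℝ) 1, fFun lam lam' c' dA x = hFun lam dA dB aB → x = a)))) := by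
  have hthA : thA = muG + dA := by rw [hdA]; ring
  have hthB : thB = muG + dB := by rw [hdB]; ring
  subst hthA; subst hthB
  have hdA2 : (0:ℝ) < dA ^ 2 := by positivity
  have hlam'0 : 0 < lam' 0 := hlam'pos 0 (by norm_num)
  have hIcoIcc : Set.Ico (0:ℝ) 1 ⊆ Set.Icc 0 1 := Set.Ico_subset_Icc_self
  have h0Ico : (0:ℝ) ∈ Set.Ico (0:ℝ) 1 := by norm_num
  have hlamMono : StrictMonoOn lam (Set.Icc (0:ℝ) 1) := by
    apply strictMonoOn_of_deriv_pos (convex_Icc 0 1)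
      (fun x hx => (hlamDeriv x hx).continuousAt.continuousWithinAt)
    intro x hx
    rw [interior_Icc] at hx
    rw [(hlamDeriv x (Set.Ioo_subset_Icc_self hx)).deriv]
    exact hlam'pos x (Set.Ioo_subset_Icc_self hx)
  have hlamnn : ∀ x ∈ Set.Icc (0:ℝ) 1, 0 ≤ lam x := by
    intro x hx
    rcases eq_or_lt_of_le hx.1 with h | h
    · rw [← h, hlam0]
    · rw [← hlam0]; exact (hlamMono (by norm_num) hx h).le
  have hlamle1 : ∀ x ∈ Set.Icc (0:ℝ) 1, lam x ≤ 1 := by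
    intro x hx
    rcases eq_or_lt_of_le hx.2 with h | h
    · rw [h, hlam1]
    · rw [← hlam1]; exact (hlamMono hx (by norm_num) h).le
  -- strict monotonicity of f_A on [0,1)
  have hfMono : StrictMonoOn (fFun lam lam' c' dA) (Set.Ico (0:ℝ) 1) := by
    intro x hx y hy hxy
    have hx' := hIcoIcc hx; have hy' := hIcoIcc hy
    have h1 : lam x < lam y := hlamMono hx' hy' hxy
    have hly : 0 < lam' y := hlam'pos y hy'
    have hlx : 0 < lam' x := hlam'pos x hx'
    have h2 : c' x / lam' x < c' y / lam' y := by
      have hcx : c' x < c' y := hc'strictMono x hx y hy hxy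
      have hxy' : lam' y ≤ lam' x := hlam'anti x hx' y hy' hxy.le
      calc c' x / lam' x ≤ c' x / lam' y := by
            apply div_le_div_of_nonneg_left (hc'nonneg x hx) hly hxy'
        _ < c' y / lam' y := by
            exact div_lt_div_of_pos_right hcx hly
    have h3 : (0:ℝ) < 2 / dA ^ 2 := by positivity
    have := mul_lt_mul_of_pos_left h2 h3
    simp only [fFun]; linarith
  have hfCont : ContinuousOn (fFun lam lam' c' dA) (Set.Ico (0:ℝ) 1) := by
    show ContinuousOn (fun α => lam α + (2 / dA ^ 2) * (c' α / lam' α)) _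
    apply ContinuousOn.add
      (fun x hx => ((hlamDeriv x (hIcoIcc hx)).continuousAt.continuousWithinAt))
    apply ContinuousOn.mul continuousOn_const
    exact ContinuousOn.div hc'Cont (hlam'Cont.mono hIcoIcc)
      (fun x hx => (hlam'pos x (hIcoIcc hx)).ne')
  -- main dichotomy for a fixed aB
  have key : ∀ aB ∈ Set.Ico (0:ℝ) 1,
      (0 ≤ fFun lam lam' c' dA 0 - hFun lam dA dB aB →
        ∀ a, IsBestRespA lam c (muG + dA) (muG + dB) muG a aB → a = 0) ∧
      (fFun lam lam' c' dA 0 - hFun lam dA dB aB < 0 →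
        ∀ a, IsBestRespA lam c (muG + dA) (muG + dB) muG a aB →
          a ∈ Set.Ioo (0:ℝ) 1 ∧ fFun lam lam' c' dA a = hFun lam dA dB aB ∧
          ∀ x ∈ Set.Ioo (0:ℝ) 1, fFun lam lam' c' dA x = hFun lam dA dB aB → x = a) := by
    intro aB haB
    have hgderiv : ∀ α ∈ Set.Ico (0:ℝ) 1,
        HasDerivAt (fun x => lossA lam c (muG + dA) (muG + dB) muG x aB)
          (lam' α * (dA ^ 2 / 2) * (fFun lam lam' c' dA α - hFun lam dA dB aB)) α := by
      intro α hα
      have hl := hlamDeriv α (hIcoIcc hα)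
      have hcd := hcDeriv α hα
      have hu : HasDerivAt (fun x => dA - (lam x * dA + lam aB * dB) / 2)
          (-(lam' α * dA) / 2) α := by
        have h := (((hl.mul_const dA).add_const (lam aB * dB)).div_const 2).const_sub dA
        exact h.congr_deriv (by ring)
      have h1 := (hu.pow 2).add hcd
      have heq : (fun x => lossA lam c (muG + dA) (muG + dB) muG x aB)
          = fun x => (dA - (lam x * dA + lam aB * dB) / 2) ^ 2 + c x := by
        funext x; simp only [lossA, teamDec]; ring
      rw [heq]
      refine h1.congr_deriv ?_
      have hlne : lam' α ≠ 0 := (hlam'pos α (hIcoIcc hα)).ne'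
      simp only [fFun, hFun]
      field_simp
      ring
    have hgcont : ContinuousOn (fun x => lossA lam c (muG + dA) (muG + dB) muG x aB)
        (Set.Ico (0:ℝ) 1) :=
      fun α hα => ((hgderiv α hα).continuousAt).continuousWithinAt
    constructor
    · -- F 0 ≥ 0 : minimizer is 0
      intro hF0 a ha
      obtain ⟨haI, hmin⟩ := ha
      by_contra hne
      have ha0 : 0 < a := lt_of_le_of_ne haI.1 (Ne.symm hne)
      have hmono : StrictMonoOn (fun x => lossA lam c (muG + dA) (muG + dB) muG x aB)
          (Set.Ico (0:ℝ) 1) := by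
        apply strictMonoOn_of_deriv_pos (convex_Ico 0 1) hgcont
        intro x hx
        rw [interior_Ico] at hx
        have hxI : x ∈ Set.Ico (0:ℝ) 1 := Set.Ioo_subset_Ico_self hx
        rw [(hgderiv x hxI).deriv]
        have hFx : 0 < fFun lam lam' c' dA x - hFun lam dA dB aB := by
          have := hfMono h0Ico hxI hx.1
          linarith
        have hl := hlam'pos x (hIcoIcc hxI)
        positivity
      have h1 : lossA lam c (muG + dA) (muG + dB) muG 0 aB
          < lossA lam c (muG + dA) (muG + dB) muG a aB := hmono h0Ico haI ha0
      have h2 := hmin 0 h0Ico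
      linarith
    · -- F 0 < 0 : interior minimizer
      intro hF0 a ha
      obtain ⟨haI, hmin⟩ := ha
      -- find b with fFun b > hFun aB
      obtain ⟨b, hbI, hfb⟩ : ∃ b, b ∈ Set.Ioo (0:ℝ) 1 ∧
          hFun lam dA dB aB < fFun lam lam' c' dA b := by
        have hev1 : ∀ᶠ x in nhdsWithin 1 (Set.Iio (1:ℝ)),
            hFun lam dA dB aB * (dA ^ 2 * lam' 0) / 2 < c' x :=
          hc'top.eventually_gt_atTop _
        have hev2 : ∀ᶠ x in nhdsWithin 1 (Set.Iio (1:ℝ)), x ∈ Set.Ioo (0:ℝ) 1 := by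
          filter_upwards [self_mem_nhdsWithin,
            eventually_nhdsWithin_of_eventually_nhds
              (eventually_gt_nhds (by norm_num : (0:ℝ) < 1))] with x h1 h2
          exact ⟨h2, h1⟩
        obtain ⟨b, hbc, hb01⟩ := (hev1.and hev2).exists
        refine ⟨b, hb01, ?_⟩
        have hbIco : b ∈ Set.Ico (0:ℝ) 1 := ⟨hb01.1.le, hb01.2⟩
        have hlb : 0 < lam' b := hlam'pos b (hIcoIcc hbIco)
        have hlble : lam' b ≤ lam' 0 :=
          hlam'anti 0 (by norm_num) b (hIcoIcc hbIco) hb01.1.le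
        have h4 : c' b / lam' 0 ≤ c' b / lam' b :=
          div_le_div_of_nonneg_left (hc'nonneg b hbIco) hlb hlble
        have h5 : hFun lam dA dB aB < 2 / dA ^ 2 * (c' b / lam' 0) := by
          rw [div_mul_div_comm, lt_div_iff₀ (by positivity)]
          linarith
        have h6 : 2 / dA ^ 2 * (c' b / lam' 0) ≤ 2 / dA ^ 2 * (c' b / lam' b) :=
          mul_le_mul_of_nonneg_left h4 (by positivity)
        have h7 : 0 ≤ lam b := hlamnn b (hIcoIcc hbIco)
        simp only [fFun]; linarith
      -- IVT: root of fFun = hFun aB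
      obtain ⟨as, hasIcc, hasF⟩ : ∃ as ∈ Set.Icc (0:ℝ) b,
          fFun lam lam' c' dA as = hFun lam dA dB aB := by
        have hsub : Set.Icc (0:ℝ) b ⊆ Set.Ico 0 1 := Set.Icc_subset_Ico_right hbI.2
        have hmem : hFun lam dA dB aB ∈
            Set.Icc (fFun lam lam' c' dA 0) (fFun lam lam' c' dA b) :=
          ⟨by linarith, hfb.le⟩
        obtain ⟨as, h1, h2⟩ := intermediate_value_Icc hbI.1.le (hfCont.mono hsub) hmem
        exact ⟨as, h1, h2⟩
      have hasIco : as ∈ Set.Ico (0:ℝ) 1 :=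
        Set.Icc_subset_Ico_right hbI.2 hasIcc
      have has0 : 0 < as := by
        rcases eq_or_lt_of_le hasIcc.1 with h | h
        · exfalso; rw [← h] at hasF; linarith
        · exact h
      have has1 : as < 1 := hasIco.2
      -- strict antitone on [0, as]
      have hanti : StrictAntiOn (fun x => lossA lam c (muG + dA) (muG + dB) muG x aB)
          (Set.Icc 0 as) := by
        have hsub : Set.Icc (0:ℝ) as ⊆ Set.Ico 0 1 := Set.Icc_subset_Ico_right has1
        apply strictAntiOn_of_deriv_neg (convex_Icc 0 as) (hgcont.mono hsub)
        intro x hx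
        rw [interior_Icc] at hx
        have hxI : x ∈ Set.Ico (0:ℝ) 1 := hsub ⟨hx.1.le, hx.2.le⟩
        rw [(hgderiv x hxI).deriv]
        have hFx : fFun lam lam' c' dA x - hFun lam dA dB aB < 0 := by
          have := hfMono hxI hasIco hx.2
          linarith
        have hl := hlam'pos x (hIcoIcc hxI)
        have : (0:ℝ) < lam' x * (dA ^ 2 / 2) := by positivity
        exact mul_neg_of_pos_of_neg this hFx
      -- strict monotone on [as, 1)
      have hmono : StrictMonoOn (fun x => lossA lam c (muG + dA) (muG + dB) muG x aB)
          (Set.Ico as 1) := by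
        have hsub : Set.Ico as 1 ⊆ Set.Ico (0:ℝ) 1 :=
          Set.Ico_subset_Ico_left hasIco.1
        apply strictMonoOn_of_deriv_pos (convex_Ico as 1) (hgcont.mono hsub)
        intro x hx
        rw [interior_Ico] at hx
        have hxI : x ∈ Set.Ico (0:ℝ) 1 := hsub (Set.Ioo_subset_Ico_self hx)
        rw [(hgderiv x hxI).deriv]
        have hFx : 0 < fFun lam lam' c' dA x - hFun lam dA dB aB := by
          have := hfMono hasIco hxI hx.1
          linarith
        have hl := hlam'pos x (hIcoIcc hxI)
        positivity
      have haas : a = as := by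
        rcases lt_trichotomy a as with h | h | h
        · exfalso
          have h1 : lossA lam c (muG + dA) (muG + dB) muG as aB
              < lossA lam c (muG + dA) (muG + dB) muG a aB :=
            hanti ⟨haI.1, h.le⟩ ⟨hasIcc.1, le_refl as⟩ h
          have h2 := hmin as hasIco
          linarith
        · exact h
        · exfalso
          have h1 : lossA lam c (muG + dA) (muG + dB) muG as aB
              < lossA lam c (muG + dA) (muG + dB) muG a aB :=
            hmono ⟨le_refl as, has1⟩ ⟨h.le, haI.2⟩ h
          have h2 := hmin as hasIco
          linarith
      subst haas
      refine ⟨⟨has0, has1⟩, hasF, ?_⟩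
      intro x hx hxF
      exact hfMono.injOn ⟨hx.1.le, hx.2⟩ hasIco (by rw [hxF, hasF])
  -- the value F 0 in explicit form
  have hF0eq : ∀ aB : ℝ, fFun lam lam' c' dA 0 - hFun lam dA dB aB
      = (2 * (c' 0 / lam' 0) - 2 * dA ^ 2 + lam aB * dA * dB) / dA ^ 2 := by
    intro aB
    simp only [fFun, hFun, hlam0]
    field_simp
    ring
  refine ⟨?_, ?_, ?_⟩
  · -- (i)
    intro Hp aB haB a ha
    have heq : dA ^ 2 * (1 - 1 / (2 * (dA / dB))) = dA ^ 2 - dA * dB / 2 := by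
      field_simp
    rw [heq] at Hp
    apply (key aB haB).1 _ a ha
    rw [hF0eq]
    apply div_nonneg _ hdA2.le
    have hle1 : lam aB ≤ 1 := hlamle1 aB (hIcoIcc haB)
    have h2 : (1 - lam aB) * (dA * dB) ≤ 0 :=
      mul_nonpos_of_nonneg_of_nonpos (by linarith) hconf.le
    nlinarith
  · -- (ii)
    intro _ aB haB Hgt a ha
    apply (key aB haB).2 _ a ha
    rw [hF0eq]
    apply div_neg_of_neg_of_pos _ hdA2
    nlinarith
  · -- (iii)
    rintro ⟨_, _⟩ aB haB a ha
    constructor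
    · intro Hle
      apply (key aB haB).1 _ a ha
      rw [hF0eq]
      apply div_nonneg _ hdA2.le
      rw [le_div_iff_of_neg hconf] at Hle
      nlinarith
    · intro Hgt
      apply (key aB haB).2 _ a ha
      rw [hF0eq]
      apply div_neg_of_neg_of_pos _ hdA2
      rw [gt_iff_lt, div_lt_iff_of_neg hconf] at Hgt
      nlinarith
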